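/- Let A be an index set and, for each α ∈ A, let (X_n)_{n≥1} be i.i.d. mean-zero random variables on (Ω_α, F_α, P_α) with 0 < σ̲² < Var_{P_α}(X) < σ̄² < ∞ for all α ∈ A, and fix q > 2 with E_{P_α}|X|^q < ∞ for all α. Suppose the q-th moment of X is NOT A-uniformly integrable, i.e. lim_{K→∞} sup_{α∈A} E_{P_α}(|X|^q·1{|X|^q ≥ K}) > 0. Then for every collection of constructions (Ω̃_α, F̃_α, P̃_α)_{α∈A} (with (X̃_n) equidistributed with (X_n) and (Ỹ_n) i.i.d. mean-zero Gaussian with variance Var_{P_α}(X)) one has lim_{m→∞} sup_{α∈A} P̃_α( sup_{k≥m} k^{−1/q}·|Σ_{i=1}^k (X̃_i − Ỹ_i)| ≥ 1/4 ) > 0. -/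

import Mathlib

open MeasureTheory ProbabilityTheory Filter Topology

open MeasureTheory ProbabilityTheory Filter Topology Real

lemma gauss_tail (v : NNReal) (hv : v ≠ 0) (t : ℝ) (ht : 0 ≤ t) :
    gaussianReal 0 v {x | t ≤ |x|} ≤ ENNReal.ofReal (Real.sqrt 2 * Real.exp (-(t^2)/(4*v))) := by
  have hvpos : (0:ℝ) < v := by positivity
  set s : Set ℝ := {x | t ≤ |x|} with hs
  have hsm : MeasurableSet s := by
    have : s = (fun x : ℝ => |x|) ⁻¹' (Set.Ici t) := rfl
    rw [this]; exact measurable_abs measurableSet_Ici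
  rw [gaussianReal_apply_eq_integral 0 hv s]
  apply ENNReal.ofReal_le_ofReal
  set g : ℝ → ℝ := fun x => (Real.sqrt (2*π*v))⁻¹ * (Real.exp (-(t^2)/(4*v)) * Real.exp (-(1/(4*(v:ℝ)))*x^2)) with hg
  have hb : (0:ℝ) < 1/(4*(v:ℝ)) := by positivity
  have hgint : Integrable g := by
    apply Integrable.const_mul
    exact (integrable_exp_neg_mul_sq hb).const_mul _
  have hle : ∀ x ∈ s, gaussianPDFReal 0 v x ≤ g x := by
    intro x hx
    have hx' : t ≤ |x| := hx
    have hx2 : t^2 ≤ x^2 := by nlinarith [sq_abs x, abs_nonneg x]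
    rw [gaussianPDFReal]
    apply mul_le_mul_of_nonneg_left _ (by positivity)
    rw [← Real.exp_add]
    apply Real.exp_le_exp.2
    have : x - 0 = x := by ring
    rw [this]
    rw [div_le_iff₀ (by positivity), add_mul]
    have e1 : -t ^ 2 / (4 * (v:ℝ)) * (2*v) = -t^2/2 := by field_simp; ring
    have e2 : -(1 / (4 * (v:ℝ))) * x ^ 2 * (2*v) = -x^2/2 := by field_simp; ring
    have e3 : -x ^ 2 / (2 * (v:ℝ)) * (2*v) = -x^2 := by field_simp
    nlinarith [e1,e2,e3]
  calc ∫ x in s, gaussianPDFReal 0 v x ≤ ∫ x in s, g x :=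
        setIntegral_mono_on ((integrable_gaussianPDFReal 0 v).restrict) (hgint.restrict) hsm hle
    _ ≤ ∫ x, g x := setIntegral_le_integral hgint (ae_of_all _ (fun x => by positivity))
    _ = Real.sqrt 2 * Real.exp (-(t^2)/(4*v)) := by
        rw [hg]
        simp only []
        rw [MeasureTheory.integral_const_mul, MeasureTheory.integral_const_mul, integral_gaussian]
        have e0 : π / (1/(4*(v:ℝ))) = 4*π*(v:ℝ) := by field_simp
        rw [e0]
        have e1 : Real.sqrt (4*π*(v:ℝ)) = Real.sqrt 2 * Real.sqrt (2*π*(v:ℝ)) := by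
          rw [show (4*π*(v:ℝ)) = 2 * (2*π*(v:ℝ)) by ring]
          exact Real.sqrt_mul (by norm_num) _
        rw [e1]
        have h2 : Real.sqrt (2*π*(v:ℝ)) ≠ 0 := by positivity
        field_simp

lemma aux_exp_bound (k : ℕ) {x : ℝ} (hx : 0 < x) :
    Real.exp (-x) ≤ (k.factorial : ℝ) / x ^ k := by
  have h1 : x ^ k / (k.factorial : ℝ) ≤ Real.exp x := by
    calc x ^ k / (k.factorial : ℝ) ≤ ∑ i ∈ Finset.range (k+1), x ^ i / (i.factorial : ℝ) := by
          exact Finset.single_le_sum (f := fun i => x ^ i / (i.factorial : ℝ))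
            (fun i _ => by positivity) (Finset.self_mem_range_succ k)
      _ ≤ Real.exp x := Real.sum_le_exp_of_nonneg hx.le _
  rw [Real.exp_neg]
  have h2 : (Real.exp x)⁻¹ ≤ (x ^ k / (k.factorial : ℝ))⁻¹ := by
    apply inv_anti₀ (by positivity) h1
  simpa [inv_div] using h2

lemma aux_prod_bound (s : Finset ℕ) (p : ℕ → ENNReal) (hp : ∀ i, p i ≤ 1) :
    ∏ i ∈ s, (1 - p i) ≤ ENNReal.ofReal (Real.exp (-(∑ i ∈ s, (p i).toReal))) := by
  have h1 : ∀ i, (1 : ENNReal) - p i = ENNReal.ofReal (1 - (p i).toReal) := by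
    intro i
    rw [ENNReal.ofReal_sub _ (ENNReal.toReal_nonneg), ENNReal.ofReal_one,
      ENNReal.ofReal_toReal (lt_of_le_of_lt (hp i) ENNReal.one_lt_top).ne]
  calc ∏ i ∈ s, (1 - p i) = ∏ i ∈ s, ENNReal.ofReal (1 - (p i).toReal) := by
        simp_rw [h1]
    _ ≤ ∏ i ∈ s, ENNReal.ofReal (Real.exp (-(p i).toReal)) := by
        apply Finset.prod_le_prod' -- ? name
        intro i _
        exact ENNReal.ofReal_le_ofReal (Real.one_sub_le_exp_neg _)
    _ = ENNReal.ofReal (∏ i ∈ s, Real.exp (-(p i).toReal)) := by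
        rw [ENNReal.ofReal_prod_of_nonneg (fun i _ => (Real.exp_pos _).le)]
    _ = ENNReal.ofReal (Real.exp (-(∑ i ∈ s, (p i).toReal))) := by
        rw [← Real.exp_sum]
        simp [Finset.sum_neg_distrib]

lemma aux_tail_integral {Ω : Type*} [MeasurableSpace Ω] (P : Measure Ω) [IsProbabilityMeasure P]
    {f : Ω → ℝ} (hfm : Measurable f) (hf0 : ∀ ω, 0 ≤ f ω) (hfi : Integrable f P) :
    Tendsto (fun n : ℕ => ∫ ω in {ω | (n : ℝ) ≤ f ω}, f ω ∂P) atTop (𝓝 0) := by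
  have hsm : ∀ n : ℕ, MeasurableSet {ω | (n : ℝ) ≤ f ω} := fun n =>
    measurableSet_le measurable_const hfm
  have heq : ∀ n : ℕ, ∫ ω in {ω | (n : ℝ) ≤ f ω}, f ω ∂P
      = ∫ ω, Set.indicator {ω | (n : ℝ) ≤ f ω} f ω ∂P := fun n =>
    (integral_indicator (hsm n)).symm
  simp_rw [heq]
  have h0 : (0 : ℝ) = ∫ ω, (0 : ℝ) ∂P := by simp
  rw [h0]
  apply tendsto_integral_of_dominated_convergence f
    (fun n => ((hfm.indicator (hsm n)).aestronglyMeasurable))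
    hfi
  · intro n
    filter_upwards with ω
    rw [Real.norm_eq_abs, abs_of_nonneg (Set.indicator_nonneg (fun ω _ => hf0 ω) ω)]
    exact Set.indicator_le_self' (fun ω _ => hf0 ω) ω
  · filter_upwards with ω
    apply tendsto_const_nhds.congr'
    filter_upwards [eventually_ge_atTop (⌊f ω⌋₊ + 1)] with n hn
    symm; apply Set.indicator_of_notMem
    intro hmem
    have : f ω < n := by
      calc f ω < ⌊f ω⌋₊ + 1 := Nat.lt_floor_add_one _
        _ ≤ n := by exact_mod_cast hn
    exact absurd hmem (not_le.2 this)

lemma aux_count {Ω : Type*} [MeasurableSpace Ω] (P : Measure Ω) [IsProbabilityMeasure P]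
    {f : Ω → ℝ} (hfm : Measurable f) (hf0 : ∀ ω, 0 ≤ f ω) (hfi : Integrable f P)
    (c2 : ℝ) (hc2 : 1 ≤ c2) (m M : ℕ) (ε : ℝ) (hε : 0 < ε)
    (hK : ε ≤ ∫ ω in {ω | 2*c2*((m:ℝ)+2) ≤ f ω}, f ω ∂P)
    (hM : ∫ ω in {ω | c2*(M:ℝ) ≤ f ω}, f ω ∂P ≤ ε/2) :
    ε/(4*c2) ≤ ∑ i ∈ Finset.Ico m M, (P {ω | c2*((i:ℝ)+1) ≤ f ω}).toReal := by
  have hc2pos : (0:ℝ) < c2 := lt_of_lt_of_le one_pos hc2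
  set K0 : ℝ := 2*c2*((m:ℝ)+2) with hK0
  set S : Set Ω := {ω | K0 ≤ f ω ∧ f ω ≤ c2*(M:ℝ)} with hS
  have hsmS : MeasurableSet S :=
    (measurableSet_le measurable_const hfm).inter (measurableSet_le hfm measurable_const)
  have hEm : ∀ i : ℕ, MeasurableSet {ω | c2*((i:ℝ)+1) ≤ f ω} := fun i =>
    measurableSet_le measurable_const hfm
  -- step 1: ∫_S f ≥ ε/2
  have hSf : ε/2 ≤ ∫ ω in S, f ω ∂P := by
    have hsplit : {ω | K0 ≤ f ω} = S ∪ ({ω | K0 ≤ f ω ∧ c2*(M:ℝ) < f ω}) := by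
      ext ω; simp only [Set.mem_setOf_eq, Set.mem_union, hS]
      constructor
      · intro h; rcases le_or_gt (f ω) (c2*(M:ℝ)) with h'|h'
        · exact Or.inl ⟨h, h'⟩
        · exact Or.inr ⟨h, h'⟩
      · rintro (⟨h,_⟩|⟨h,_⟩) <;> exact h
    have hdisj : Disjoint S ({ω | K0 ≤ f ω ∧ c2*(M:ℝ) < f ω}) := by
      apply Set.disjoint_left.2
      rintro ω ⟨_, h2⟩ ⟨_, h3⟩
      exact absurd h3 (not_lt.2 h2)
    have hTm : MeasurableSet ({ω | K0 ≤ f ω ∧ c2*(M:ℝ) < f ω}) :=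
      (measurableSet_le measurable_const hfm).inter (measurableSet_lt measurable_const hfm)
    have hunion : ∫ ω in {ω | K0 ≤ f ω}, f ω ∂P
        = ∫ ω in S, f ω ∂P + ∫ ω in {ω | K0 ≤ f ω ∧ c2*(M:ℝ) < f ω}, f ω ∂P := by
      rw [hsplit]
      exact setIntegral_union hdisj hTm hfi.integrableOn hfi.integrableOn
    have htail : ∫ ω in {ω | K0 ≤ f ω ∧ c2*(M:ℝ) < f ω}, f ω ∂P
        ≤ ∫ ω in {ω | c2*(M:ℝ) ≤ f ω}, f ω ∂P := by
      apply setIntegral_mono_set hfi.integrableOn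
        (ae_of_all _ (fun ω => hf0 ω))
      filter_upwards with ω
      rintro ⟨_, h2⟩
      exact le_of_lt h2
    have := hK.trans hunion.le
    linarith
  -- step 2: pointwise counting bound
  have hcount : ∀ ω, Set.indicator S (fun ω => f ω / (2*c2)) ω
      ≤ ∑ i ∈ Finset.Ico m M, Set.indicator {ω | c2*((i:ℝ)+1) ≤ f ω} (fun _ => (1:ℝ)) ω := by
    intro ω
    by_cases hωS : ω ∈ S
    · rw [Set.indicator_of_mem hωS]
      obtain ⟨h1, h2⟩ := hωS
      set N' : ℕ := ⌊f ω / c2⌋₊ with hN'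
      have hfc2 : 0 ≤ f ω / c2 := div_nonneg (hf0 ω) hc2pos.le
      have hN'le : (N' : ℝ) ≤ f ω / c2 := Nat.floor_le hfc2
      have hN'gt : f ω / c2 < (N' : ℝ) + 1 := Nat.lt_floor_add_one _
      have hmN' : m ≤ N' := by
        have : (m : ℝ) + 1 ≤ f ω / c2 := by
          rw [le_div_iff₀ hc2pos]
          nlinarith
        have := this.trans hN'gt.le
        exact_mod_cast Nat.cast_le.1 (by push_cast; linarith : (m:ℝ) ≤ (N':ℝ))
      have hN'M : N' ≤ M := by
        have : f ω / c2 ≤ (M : ℝ) := by rw [div_le_iff₀ hc2pos]; linarith [h2]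
        exact Nat.floor_le_of_le this
      have hsub : Finset.Ico m N' ⊆ Finset.Ico m M :=
        Finset.Ico_subset_Ico le_rfl hN'M
      calc f ω / (2*c2) ≤ (N' : ℝ) - (m : ℝ) := by
            have hm2 : (m:ℝ) + 1 ≤ f ω / (2*c2) - 1 := by
              rw [le_sub_iff_add_le, le_div_iff₀ (by positivity)]
              nlinarith
            have : f ω / c2 - 1 ≤ (N' : ℝ) := by linarith
            have h2c2 : f ω / (2*c2) = (f ω / c2) / 2 := by ring
            nlinarith [hN'gt]
        _ = ∑ i ∈ Finset.Ico m N', (1:ℝ) := by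
            rw [Finset.sum_const, Nat.card_Ico, nsmul_eq_mul, mul_one, Nat.cast_sub hmN']
        _ = ∑ i ∈ Finset.Ico m N', Set.indicator {ω | c2*((i:ℝ)+1) ≤ f ω} (fun _ => (1:ℝ)) ω := by
            apply Finset.sum_congr rfl
            intro i hi
            rw [Set.indicator_of_mem]
            have hiN : i + 1 ≤ N' := (Finset.mem_Ico.1 hi).2
            have h5 : ((i:ℝ)+1) ≤ (N':ℝ) := by exact_mod_cast hiN
            have h6 : ((i:ℝ)+1) ≤ f ω / c2 := h5.trans hN'le
            show c2*((i:ℝ)+1) ≤ f ω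
            calc c2*((i:ℝ)+1) ≤ c2*(f ω / c2) := by nlinarith
              _ = f ω := by field_simp
        _ ≤ ∑ i ∈ Finset.Ico m M, Set.indicator {ω | c2*((i:ℝ)+1) ≤ f ω} (fun _ => (1:ℝ)) ω :=
            Finset.sum_le_sum_of_subset_of_nonneg hsub
              (fun i _ _ => Set.indicator_nonneg (fun _ _ => zero_le_one) ω)
    · rw [Set.indicator_of_notMem hωS]
      apply Finset.sum_nonneg
      intro i _
      exact Set.indicator_nonneg (fun _ _ => zero_le_one) ω
  -- step 3: integrate
  have hint1 : ∀ i ∈ Finset.Ico m M,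
      Integrable (Set.indicator {ω | c2*((i:ℝ)+1) ≤ f ω} (fun _ => (1:ℝ))) P :=
    fun i _ => (integrable_const (1:ℝ)).indicator (hEm i)
  have e1 : ∑ i ∈ Finset.Ico m M, (P {ω | c2*((i:ℝ)+1) ≤ f ω}).toReal
      = ∫ ω, ∑ i ∈ Finset.Ico m M,
          Set.indicator {ω | c2*((i:ℝ)+1) ≤ f ω} (fun _ => (1:ℝ)) ω ∂P := by
    rw [integral_finset_sum _ hint1]
    apply Finset.sum_congr rfl
    intro i _
    exact (integral_indicator_one (hEm i)).symm
  have e2 : ∫ ω, Set.indicator S (fun ω => f ω/(2*c2)) ω ∂P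
      ≤ ∫ ω, ∑ i ∈ Finset.Ico m M,
          Set.indicator {ω | c2*((i:ℝ)+1) ≤ f ω} (fun _ => (1:ℝ)) ω ∂P :=
    integral_mono ((hfi.div_const (2*c2)).indicator hsmS)
      (integrable_finset_sum _ hint1) hcount
  have e3 : ∫ ω, Set.indicator S (fun ω => f ω/(2*c2)) ω ∂P
      = (∫ ω in S, f ω ∂P)/(2*c2) := by
    rw [integral_indicator hsmS, integral_div]
  have h7 : ε/2/(2*c2) ≤ (∫ ω in S, f ω ∂P)/(2*c2) :=
    div_le_div_of_nonneg_right hSf (by positivity)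
  calc ε/(4*c2) = ε/2/(2*c2) := by ring
    _ ≤ (∫ ω in S, f ω ∂P)/(2*c2) := h7
    _ = ∫ ω, Set.indicator S (fun ω => f ω/(2*c2)) ω ∂P := e3.symm
    _ ≤ _ := e2.trans_eq e1.symm

lemma aux_cylinder {Ω Ω' : Type*} [MeasurableSpace Ω] [MeasurableSpace Ω']
    (P : Measure Ω) (P' : Measure Ω')
    (X : ℕ → Ω → ℝ) (X' : ℕ → Ω' → ℝ)
    (hmeas : ∀ n, Measurable (X n)) (hmeas' : ∀ n, Measurable (X' n))
    (hindep : iIndepFun X P)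
    (hident : ∀ n, IdentDistrib (X n) (X 0) P P)
    (hlaw : Measure.map (fun ω n => X' n ω) P' = Measure.map (fun ω n => X n ω) P)
    (s : Finset ℕ) (B : ℕ → Set ℝ) (hB : ∀ i, MeasurableSet (B i)) :
    P' (⋂ i ∈ s, X' i ⁻¹' B i) = ∏ i ∈ s, P (X 0 ⁻¹' B i) := by
  have hT' : Measurable (fun ω n => X' n ω) := measurable_pi_lambda _ hmeas'
  have hT : Measurable (fun ω n => X n ω) := measurable_pi_lambda _ hmeas
  set C : Set (ℕ → ℝ) := ⋂ i ∈ s, (fun g : ℕ → ℝ => g i) ⁻¹' B i with hCdef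
  have hC : MeasurableSet C :=
    MeasurableSet.biInter s.countable_toSet (fun i _ => (measurable_pi_apply i) (hB i))
  have e' : (⋂ i ∈ s, X' i ⁻¹' B i) = (fun ω n => X' n ω) ⁻¹' C := by
    ext ω; simp [hCdef]
  have e : (⋂ i ∈ s, X i ⁻¹' B i) = (fun ω n => X n ω) ⁻¹' C := by
    ext ω; simp [hCdef]
  rw [e', ← Measure.map_apply hT' hC, hlaw, Measure.map_apply hT hC, ← e,
    hindep.measure_inter_preimage_eq_mul s (fun i _ => hB i)]
  exact Finset.prod_congr rfl (fun i _ => (hident i).measure_mem_eq (hB i))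

lemma aux_gauss_bound (q : ℝ) (hq : 2 < q) (σu : ℝ) (hσu : 0 < σu)
    (v : ℝ) (hv1 : 0 < v) (hv2 : v < σu^2) (i : ℕ) :
    gaussianReal 0 v.toNNReal {x | (3/2)*((i:ℝ)+1)^(1/q) ≤ |x|}
      ≤ ENNReal.ofReal ((Real.sqrt 2 * (Nat.ceil q).factorial / ((9:ℝ)/(16*σu^2))^(Nat.ceil q))
          / ((i:ℝ)+1)^2) := by
  have hq0 : (0:ℝ) < q := by linarith
  have hvne : v.toNNReal ≠ 0 := by
    simp only [ne_eq, Real.toNNReal_eq_zero, not_le]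
    exact hv1
  have hvco : ((v.toNNReal : ℝ)) = v := Real.coe_toNNReal v hv1.le
  set t : ℝ := (3/2)*((i:ℝ)+1)^(1/q) with htdef
  have hu0 : (0:ℝ) < ((i:ℝ)+1)^(1/q) := Real.rpow_pos_of_pos (by positivity) _
  have ht0 : 0 ≤ t := by positivity
  refine (gauss_tail v.toNNReal hvne t ht0).trans (ENNReal.ofReal_le_ofReal ?_)
  set a : ℝ := (9:ℝ)/(16*σu^2) with hadef
  have ha0 : 0 < a := by positivity
  set k : ℕ := Nat.ceil q with hkdef
  set u : ℝ := ((i:ℝ)+1)^((2:ℝ)/q) with hudef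
  have hu1 : (1:ℝ) ≤ u := Real.one_le_rpow (by push_cast; linarith [Nat.cast_nonneg (α := ℝ) i]) (by positivity)
  have hupos : 0 < u := lt_of_lt_of_le one_pos hu1
  -- t^2 = (9/4) * u
  have ht2 : t^2 = (9/4) * u := by
    rw [htdef, hudef, mul_pow]
    have : (((i:ℝ)+1)^(1/q))^2 = ((i:ℝ)+1)^((2:ℝ)/q) := by
      rw [← Real.rpow_natCast (((i:ℝ)+1)^(1/q)) 2, ← Real.rpow_mul (by positivity)]
      norm_num
      rw [inv_mul_eq_div]
    rw [this]; norm_num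
  -- exponent comparison
  have hstep1 : Real.exp (-t^2/(4*(v.toNNReal:ℝ))) ≤ Real.exp (-(a*u)) := by
    apply Real.exp_le_exp.2
    rw [ht2, hvco, hadef, neg_div, neg_le_neg_iff, div_mul_eq_mul_div,
      div_le_div_iff₀ (by positivity) (by positivity)]
    nlinarith [mul_nonneg hupos.le (sub_pos.2 hv2).le]
  have hstep2 : Real.exp (-(a*u)) ≤ (k.factorial : ℝ) / (a*u)^k :=
    aux_exp_bound k (by positivity)
  -- u^k ≥ (i+1)^2
  have hup : ((i:ℝ)+1)^2 ≤ u^k := by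
    have h1 : u^k = ((i:ℝ)+1)^(((2:ℝ)/q)*k) := by
      rw [hudef, ← Real.rpow_natCast (((i:ℝ)+1)^((2:ℝ)/q)) k, ← Real.rpow_mul (by positivity)]
    have h2 : (2:ℝ) ≤ ((2:ℝ)/q)*k := by
      have hk : q ≤ (k:ℝ) := Nat.le_ceil q
      rw [div_mul_eq_mul_div, le_div_iff₀ hq0]
      nlinarith
    rw [h1]
    calc ((i:ℝ)+1)^2 = ((i:ℝ)+1)^((2:ℕ):ℝ) := by rw [Real.rpow_natCast]
      _ ≤ ((i:ℝ)+1)^(((2:ℝ)/q)*k) := by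
          apply Real.rpow_le_rpow_of_exponent_le (by push_cast; linarith [Nat.cast_nonneg (α := ℝ) i])
          push_cast; exact h2
  calc Real.sqrt 2 * Real.exp (-t^2/(4*(v.toNNReal:ℝ)))
      ≤ Real.sqrt 2 * ((k.factorial : ℝ) / (a*u)^k) := by
        apply mul_le_mul_of_nonneg_left (hstep1.trans hstep2) (Real.sqrt_nonneg 2)
    _ ≤ Real.sqrt 2 * (((k.factorial : ℝ)/a^k) / ((i:ℝ)+1)^2) := by
        apply mul_le_mul_of_nonneg_left _ (Real.sqrt_nonneg 2)
        rw [mul_pow, div_div]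
        exact div_le_div_of_nonneg_left (by positivity) (by positivity)
          (by nlinarith [hup, pow_pos ha0 k])
    _ = (Real.sqrt 2 * (k.factorial : ℝ) / a^k) / ((i:ℝ)+1)^2 := by ring

set_option maxHeartbeats 2000000 in
/-- **Distribution-uniform Komlós–Major–Tusnády approximation for finite power moments,
necessity.**  Let `(X n)` be i.i.d. mean-zero on an `A`-indexed family of probability
spaces with `0 < σ̲² < Var_{P α}(X) < σ̄² < ∞`, fix `q > 2` with `E_{P α}|X|^q < ∞` for
every `α`, and suppose the `q`-th moment is NOT `A`-uniformly integrable (there is `ε > 0`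
such that for every truncation level `K` some `α` has truncated `q`-th moment at least
`ε`).  Then for every collection of constructions,
`lim_{m→∞} sup_α P̃_α( sup_{k≥m} k^{-1/q} |∑_{i≤k} (X̃ i − Ỹ i)| ≥ 1/4 ) > 0`; since the
quantity is nonincreasing in `m`, the limit is the infimum over `m`. -/
theorem uniform_kmt_power_moments_necessity
    (A : Type*) (Ω : A → Type*) [∀ α, MeasurableSpace (Ω α)]
    (P : ∀ α, Measure (Ω α)) [∀ α, IsProbabilityMeasure (P α)]
    (X : ∀ α, ℕ → Ω α → ℝ)
    (hmeas : ∀ α n, Measurable (X α n))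
    (hindep : ∀ α, iIndepFun (X α) (P α))
    (hident : ∀ α n, IdentDistrib (X α n) (X α 0) (P α) (P α))
    (hmean : ∀ α n, ∫ ω, X α n ω ∂(P α) = 0)
    (σl σu : ℝ) (hσl : 0 < σl) (hσlu : σl ≤ σu)
    (hvar : ∀ α, σl ^ 2 < variance (X α 0) (P α) ∧ variance (X α 0) (P α) < σu ^ 2)
    (q : ℝ) (hq : 2 < q)
    (hInt : ∀ α, Integrable (fun ω => |X α 0 ω| ^ q) (P α))
    (hNUI : ∃ ε : ℝ, 0 < ε ∧ ∀ K : ℝ, ∃ α,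
      ε ≤ ∫ ω in {ω | K ≤ |X α 0 ω| ^ q}, |X α 0 ω| ^ q ∂(P α))
    -- an arbitrary collection of constructions:
    (Ω' : A → Type*) [∀ α, MeasurableSpace (Ω' α)]
    (P' : ∀ α, Measure (Ω' α)) [∀ α, IsProbabilityMeasure (P' α)]
    (X' Y' : ∀ α, ℕ → Ω' α → ℝ)
    (hmeas' : ∀ α n, Measurable (X' α n))
    (hmeasY : ∀ α n, Measurable (Y' α n))
    (hlaw : ∀ α, Measure.map (fun ω n => X' α n ω) (P' α)
        = Measure.map (fun ω n => X α n ω) (P α))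
    (hYindep : ∀ α, iIndepFun (Y' α) (P' α))
    (hYgauss : ∀ α n, Measure.map (Y' α n) (P' α)
        = gaussianReal 0 (variance (X α 0) (P α)).toNNReal) :
    0 < ⨅ m : ℕ, ⨆ α, (P' α) {ω | ∃ k ≥ m,
        (1 / 4 : ℝ) ≤ |∑ i ∈ Finset.range k, (X' α i ω - Y' α i ω)| / (k : ℝ) ^ (1 / q)} := by
  classical
  obtain ⟨ε, hε, hNUI⟩ := hNUI
  have hq0 : (0:ℝ) < q := by linarith
  have hσu : (0:ℝ) < σu := lt_of_lt_of_le hσl hσlu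
  -- constants
  set c2 : ℝ := (2:ℝ) ^ q with hc2def
  have hc2 : (1:ℝ) ≤ c2 := Real.one_le_rpow (by norm_num) hq0.le
  have hc2pos : (0:ℝ) < c2 := lt_of_lt_of_le one_pos hc2
  set c3 : ℝ := ε/(4*c2) with hc3def
  have hc3 : 0 < c3 := by positivity
  set δr : ℝ := (1 - Real.exp (-c3))/2 with hδrdef
  have hδr : 0 < δr := by
    have : Real.exp (-c3) < 1 := Real.exp_lt_one_iff.2 (by linarith)
    rw [hδrdef]; linarith
  set δE : ENNReal := ENNReal.ofReal δr with hδEdef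
  have hδE : 0 < δE := ENNReal.ofReal_pos.2 hδr
  set a : ℝ := (9:ℝ)/(16*σu^2) with hadef
  have ha0 : 0 < a := by positivity
  set k : ℕ := Nat.ceil q with hkdef
  set C : ℝ := Real.sqrt 2 * (k.factorial : ℝ) / a^k with hCdef
  have hC0 : 0 ≤ C := by positivity
  -- target sets
  set B : ∀ α, ℕ → Set (Ω' α) := fun α m => {ω | ∃ k ≥ m,
      (1 / 4 : ℝ) ≤ |∑ i ∈ Finset.range k, (X' α i ω - Y' α i ω)| / (k : ℝ) ^ (1 / q)} with hBdef
  -- Gaussian tail sets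
  set G : ∀ α, ℕ → Set (Ω' α) := fun α i =>
    {ω | (3/2)*((i:ℝ)+1)^(1/q) ≤ |Y' α i ω|} with hGdef
  -- summable bound for Gaussian tails
  have habs : Measurable (fun x : ℝ => |x| ^ q) :=
    (Real.continuous_rpow_const hq0.le).measurable.comp measurable_abs
  have hGset : ∀ i : ℕ, MeasurableSet {x : ℝ | (3/2)*((i:ℝ)+1)^(1/q) ≤ |x|} := fun i =>
    measurableSet_le measurable_const measurable_abs
  have hGbound : ∀ α (i : ℕ), (P' α) (G α i) ≤ ENNReal.ofReal (C / ((i:ℝ)+1)^2) := by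
    intro α i
    have h1 : G α i = Y' α i ⁻¹' {x : ℝ | (3/2)*((i:ℝ)+1)^(1/q) ≤ |x|} := rfl
    rw [h1, ← Measure.map_apply (hmeasY α i) (hGset i), hYgauss α i]
    exact aux_gauss_bound q hq σu hσu _ (lt_trans (by positivity) (hvar α).1) (hvar α).2 i
  -- the tail sum
  set gE : ℕ → ENNReal := fun i => ENNReal.ofReal (C / ((i:ℝ)+1)^2) with hgEdef
  have hsumR : Summable (fun i : ℕ => C / ((i:ℝ)+1)^2) := by
    have h0 : Summable (fun n : ℕ => C * (1/(n:ℝ)^2)) :=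
      (Real.summable_one_div_nat_pow.2 (le_refl 2)).mul_left C
    have h1 : Summable (fun n : ℕ => C * (1/((n+1:ℕ):ℝ)^2)) := by
      exact (summable_nat_add_iff 1).2 h0
    apply h1.congr
    intro i; push_cast; ring
  have hgEtop : ∑' i, gE i ≠ ⊤ := by
    rw [hgEdef, ← ENNReal.ofReal_tsum_of_nonneg (fun i => by positivity) hsumR]
    exact ENNReal.ofReal_ne_top
  have htail : Tendsto (fun m : ℕ => ∑' i, gE (i + m)) atTop (𝓝 0) :=
    ENNReal.tendsto_sum_nat_add gE hgEtop
  obtain ⟨M1, hM1⟩ : ∃ M1 : ℕ, ∀ m ≥ M1, ∑' i, gE (i + m) < δE := by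
    have := (htail.eventually_lt_const hδE)
    rw [eventually_atTop] at this
    exact this
  -- union bound for Gaussian part
  have hGunion : ∀ α (m : ℕ), (P' α) {ω | ∃ i ≥ m, (3/2)*((i:ℝ)+1)^(1/q) ≤ |Y' α i ω|}
      ≤ ∑' i, gE (i + m) := by
    intro α m
    have hsub : {ω | ∃ i ≥ m, (3/2)*((i:ℝ)+1)^(1/q) ≤ |Y' α i ω|}
        ⊆ ⋃ j : ℕ, G α (j + m) := by
      rintro ω ⟨i, him, hi⟩
      apply Set.mem_iUnion.2 ⟨i - m, ?_⟩
      rw [hGdef]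
      simpa [Nat.sub_add_cancel him] using hi
    calc (P' α) _ ≤ (P' α) (⋃ j : ℕ, G α (j + m)) := measure_mono hsub
      _ ≤ ∑' j, (P' α) (G α (j + m)) := measure_iUnion_le _
      _ ≤ ∑' j, gE (j + m) := ENNReal.tsum_le_tsum (fun j => hGbound α (j + m))
  -- main claim: for all m ≥ max M1 1, some α has δE ≤ P' α (B α m)
  have hmain : ∀ m : ℕ, M1 ≤ m → 1 ≤ m → ∃ α, δE ≤ (P' α) (B α m) := by
    intro m hmM1 hm1
    obtain ⟨α, hα⟩ := hNUI (2*c2*((m:ℝ)+2))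
    set f : Ω α → ℝ := fun ω => |X α 0 ω| ^ q with hfdef
    have hfm : Measurable f := habs.comp (hmeas α 0)
    have hf0 : ∀ ω, 0 ≤ f ω := fun ω => Real.rpow_nonneg (abs_nonneg _) q
    have hfi : Integrable f (P α) := hInt α
    -- choose M
    obtain ⟨M, hMge, hM⟩ : ∃ M : ℕ, m < M ∧ ∫ ω in {ω | c2*(M:ℝ) ≤ f ω}, f ω ∂(P α) ≤ ε/2 := by
      have := aux_tail_integral (P α) hfm hf0 hfi
      have h2 := this.eventually (eventually_le_nhds (by linarith : (0:ℝ) < ε/2))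
      rw [eventually_atTop] at h2
      obtain ⟨n0, hn0⟩ := h2
      refine ⟨max n0 (m+1), lt_of_lt_of_le (Nat.lt_succ_self m) (le_max_right _ _), ?_⟩
      have hsub2 : {ω | c2*((max n0 (m+1) : ℕ):ℝ) ≤ f ω} ⊆ {ω | ((max n0 (m+1):ℕ):ℝ) ≤ f ω} := by
        intro ω hω
        simp only [Set.mem_setOf_eq] at *
        nlinarith [hω, hc2, Nat.cast_nonneg (α := ℝ) (max n0 (m+1))]
      calc ∫ ω in {ω | c2*((max n0 (m+1):ℕ):ℝ) ≤ f ω}, f ω ∂(P α)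
          ≤ ∫ ω in {ω | ((max n0 (m+1):ℕ):ℝ) ≤ f ω}, f ω ∂(P α) :=
            setIntegral_mono_set hfi.integrableOn (ae_of_all _ hf0)
              (HasSubset.Subset.eventuallyLE hsub2)
        _ ≤ ε/2 := hn0 _ (le_max_left _ _)
    -- the counting lower bound
    have hcnt : ε/(4*c2) ≤ ∑ i ∈ Finset.Ico m M,
        ((P α) {ω | c2*((i:ℝ)+1) ≤ f ω}).toReal :=
      aux_count (P α) hfm hf0 hfi c2 hc2 m M ε hε hα hM
    -- events on the construction side
    set Bc : ℕ → Set ℝ := fun i => {x : ℝ | c2*((i:ℝ)+1) ≤ |x| ^ q} with hBcdef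
    have hBcm : ∀ i, MeasurableSet (Bc i) := fun i => measurableSet_le measurable_const habs
    set U : Set (Ω' α) := ⋃ i ∈ Finset.Ico m M, X' α i ⁻¹' Bc i with hUdef
    have hUm : MeasurableSet U :=
      MeasurableSet.biUnion (Finset.Ico m M).countable_toSet
        (fun i _ => (hmeas' α i) (hBcm i))
    have hUc : Uᶜ = ⋂ i ∈ Finset.Ico m M, X' α i ⁻¹' (Bc i)ᶜ := by
      rw [hUdef, Set.compl_iUnion₂]
      simp [Set.preimage_compl]
    -- product bound
    have hprod : (P' α) Uᶜ ≤ ENNReal.ofReal (Real.exp (-c3)) := by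
      rw [hUc, aux_cylinder (P α) (P' α) (X α) (X' α) (hmeas α) (hmeas' α)
        (hindep α) (hident α) (hlaw α) (Finset.Ico m M) (fun i => (Bc i)ᶜ)
        (fun i => (hBcm i).compl)]
      have hcompl : ∀ i : ℕ, (P α) (X α 0 ⁻¹' (Bc i)ᶜ)
          = 1 - (P α) {ω | c2*((i:ℝ)+1) ≤ f ω} := by
        intro i
        rw [Set.preimage_compl, prob_compl_eq_one_sub ((hmeas α 0) (hBcm i))]
        rfl
      calc ∏ i ∈ Finset.Ico m M, (P α) (X α 0 ⁻¹' (Bc i)ᶜ)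
          = ∏ i ∈ Finset.Ico m M, (1 - (P α) {ω | c2*((i:ℝ)+1) ≤ f ω}) :=
            Finset.prod_congr rfl (fun i _ => hcompl i)
        _ ≤ ENNReal.ofReal (Real.exp (-(∑ i ∈ Finset.Ico m M,
              ((P α) {ω | c2*((i:ℝ)+1) ≤ f ω}).toReal))) :=
            aux_prod_bound _ _ (fun i => prob_le_one)
        _ ≤ ENNReal.ofReal (Real.exp (-c3)) := by
            apply ENNReal.ofReal_le_ofReal
            apply Real.exp_le_exp.2
            rw [hc3def]
            exact neg_le_neg hcnt
    -- lower bound for U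
    have hU : ENNReal.ofReal (2*δr) ≤ (P' α) U := by
      have h1 : (P' α) U = 1 - (P' α) Uᶜ := by
        rw [← prob_compl_eq_one_sub hUm.compl, compl_compl]
      rw [h1]
      have h2 : ENNReal.ofReal (2*δr) = 1 - ENNReal.ofReal (Real.exp (-c3)) := by
        rw [← ENNReal.ofReal_one, ← ENNReal.ofReal_sub _ (Real.exp_pos _).le]
        congr 1
        rw [hδrdef]; ring
      rw [h2]
      exact tsub_le_tsub_left hprod 1
    -- inclusion U ⊆ B α m ∪ (gaussian tail event)
    have hincl : U ⊆ B α m ∪ {ω | ∃ i ≥ m, (3/2)*((i:ℝ)+1)^(1/q) ≤ |Y' α i ω|} := by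
      intro ω hω
      by_cases hωB : ω ∈ B α m
      · exact Or.inl hωB
      right
      rw [hUdef] at hω
      simp only [Set.mem_iUnion, Set.mem_preimage, Finset.mem_Ico, exists_prop] at hω
      obtain ⟨i, ⟨him, hiM⟩, hXi⟩ := hω
      have hXi' : c2*((i:ℝ)+1) ≤ |X' α i ω| ^ q := hXi
      refine ⟨i, him, ?_⟩
      -- derive 2*(i+1)^{1/q} ≤ |X' α i ω|
      set u : ℝ := ((i:ℝ)+1)^(1/q) with hudef
      have hu0 : (0:ℝ) < u := Real.rpow_pos_of_pos (by positivity) _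
      have hX2 : 2*u ≤ |X' α i ω| := by
        have h3 : (c2*((i:ℝ)+1))^(1/q) ≤ (|X' α i ω| ^ q)^(1/q) :=
          Real.rpow_le_rpow (by positivity) hXi' (by positivity)
        have h4 : (|X' α i ω| ^ q)^(1/q) = |X' α i ω| := by
          rw [← Real.rpow_mul (abs_nonneg _), mul_one_div, div_self hq0.ne', Real.rpow_one]
        have h5 : (c2*((i:ℝ)+1))^(1/q) = 2*u := by
          rw [Real.mul_rpow (by positivity) (by positivity), hc2def,
            ← Real.rpow_mul (by norm_num : (0:ℝ) ≤ 2), mul_one_div, div_self hq0.ne',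
            Real.rpow_one, hudef]
        rw [← h5, ← h4]; exact h3
      -- partial sums are small
      have hnotB : ∀ j : ℕ, m ≤ j →
          |∑ l ∈ Finset.range j, (X' α l ω - Y' α l ω)| / (j:ℝ)^(1/q) < 1/4 := by
        intro j hj
        by_contra hcon
        exact hωB ⟨j, hj, not_lt.1 hcon⟩
      set S : ℕ → ℝ := fun j => ∑ l ∈ Finset.range j, (X' α l ω - Y' α l ω) with hSdef
      have hi1 : 1 ≤ i := le_trans hm1 him
      have hipos : (0:ℝ) < (i:ℝ) := by exact_mod_cast hi1
      have hSi : |S i| ≤ (1/4) * u := by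
        have h6 := hnotB i him
        have hip : (0:ℝ) < (i:ℝ)^(1/q) := Real.rpow_pos_of_pos hipos _
        rw [div_lt_iff₀ hip] at h6
        have h7 : (i:ℝ)^(1/q) ≤ u := by
          rw [hudef]
          exact Real.rpow_le_rpow hipos.le (by linarith) (by positivity)
        nlinarith [h6, h7, hip]
      have hSi1 : |S (i+1)| ≤ (1/4) * u := by
        have h6 := hnotB (i+1) (le_trans him (Nat.le_succ i))
        have hip : (0:ℝ) < (((i+1:ℕ)):ℝ)^(1/q) := Real.rpow_pos_of_pos (by positivity) _
        rw [div_lt_iff₀ hip] at h6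
        have h7 : (((i+1:ℕ)):ℝ)^(1/q) = u := by rw [hudef]; norm_num
        rw [h7] at h6
        linarith
      have e7 : X' α i ω = Y' α i ω + (S (i+1) - S i) := by
        rw [hSdef]
        simp only [Finset.sum_range_succ]
        ring
      have e8 : |X' α i ω| ≤ |Y' α i ω| + |S (i+1)| + |S i| := by
        rw [e7]
        calc |Y' α i ω + (S (i+1) - S i)| ≤ |Y' α i ω| + |S (i+1) - S i| := abs_add_le _ _
          _ ≤ |Y' α i ω| + (|S (i+1)| + |S i|) := by
              apply add_le_add (le_refl _) (abs_sub _ _)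
          _ = |Y' α i ω| + |S (i+1)| + |S i| := by ring
      show (3/2)*((i:ℝ)+1)^(1/q) ≤ |Y' α i ω|
      rw [← hudef]
      linarith
    -- conclude
    have h8 : ENNReal.ofReal (2*δr) ≤ (P' α) (B α m) + δE := by
      refine hU.trans ?_
      calc (P' α) U ≤ (P' α) (B α m ∪ {ω | ∃ i ≥ m, (3/2)*((i:ℝ)+1)^(1/q) ≤ |Y' α i ω|}) :=
            measure_mono hincl
        _ ≤ (P' α) (B α m) + (P' α) {ω | ∃ i ≥ m, (3/2)*((i:ℝ)+1)^(1/q) ≤ |Y' α i ω|} :=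
            measure_union_le _ _
        _ ≤ (P' α) (B α m) + δE := by
            apply add_le_add (le_refl _) ((hGunion α m).trans (hM1 m hmM1).le)
    refine ⟨α, ?_⟩
    have h9 : ENNReal.ofReal (2*δr) - δE ≤ (P' α) (B α m) := tsub_le_iff_right.2 h8
    have h10 : ENNReal.ofReal (2*δr) - δE = δE := by
      rw [hδEdef, ← ENNReal.ofReal_sub _ hδr.le]
      congr 1
      ring
    rwa [h10] at h9
  -- final conclusion
  apply lt_of_lt_of_le hδE
  apply le_iInf
  intro m
  obtain ⟨α, hα⟩ := hmain (max m (max M1 1))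
    (le_trans (le_max_left M1 1) (le_max_right _ _))
    (le_trans (le_max_right M1 1) (le_max_right _ _))
  have hBsub : B α (max m (max M1 1)) ⊆ B α m := by
    rintro ω ⟨j, hj, h⟩
    exact ⟨j, le_trans (le_max_left m _) hj, h⟩
  calc δE ≤ (P' α) (B α (max m (max M1 1))) := hα
    _ ≤ (P' α) (B α m) := measure_mono hBsub
    _ ≤ ⨆ α, (P' α) (B α m) := le_iSup (fun α => (P' α) (B α m)) α
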